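/- For every m ≥ 2 and t ≥ 1, the distinguishing number of the generalized Mycielskian of the star satisfies dist(μ_t(K_{1,m})) = m. -/

import Mathlib

open SimpleGraph

/-- The generalized Mycielskian `μ_t(G)`: levels `0,…,t` of copies of `V(G)`
plus a root `none`. Level-0 vertices are the original vertices. -/
def genMyc {V : Type*} (G : SimpleGraph V) (t : ℕ) :
    SimpleGraph (Option (Fin (t + 1) × V)) :=
  SimpleGraph.fromRel fun a b =>
    match a, b with
    | some (s, i), some (s', j) =>
        ((s : ℕ) = 0 ∧ (s' : ℕ) = 0 ∧ G.Adj i j) ∨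
        ((s' : ℕ) = (s : ℕ) + 1 ∧ G.Adj i j)
    | some (s, _), none => (s : ℕ) = t
    | _, _ => False

/-- The (traditional) Mycielskian `μ(G)`. -/
def myc {V : Type*} (G : SimpleGraph V) : SimpleGraph (Option (Fin 2 × V)) :=
  genMyc G 1

/-- The star `K_{1,m}` with center `0` and `m` leaves. -/
def starG (m : ℕ) : SimpleGraph (Fin (m + 1)) :=
  SimpleGraph.fromRel fun a _ => a = 0

/-- A `d`-coloring is distinguishing if only the trivial automorphism preserves it. -/
def IsDistinguishing {V : Type*} (H : SimpleGraph V) (d : ℕ) (c : V → Fin d) : Prop :=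
  ∀ φ : H ≃g H, (∀ v, c (φ v) = c v) → ∀ v, φ v = v

/-- The distinguishing number of a graph. -/
noncomputable def distNum {V : Type*} (H : SimpleGraph V) : ℕ :=
  sInf {d | ∃ c : V → Fin d, IsDistinguishing H d c}

lemma starG_adj (m : ℕ) (i j : Fin (m+1)) :
    (starG m).Adj i j ↔ i ≠ j ∧ (i = 0 ∨ j = 0) := by
  simp [starG, fromRel_adj]

lemma genMyc_adj_some_none {V : Type*} (G : SimpleGraph V) (t : ℕ) (s : Fin (t+1)) (i : V) :
    (genMyc G t).Adj (some (s,i)) none ↔ (s:ℕ) = t := by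
  simp [genMyc, fromRel_adj]

lemma genMyc_adj_some_some {V : Type*} (G : SimpleGraph V) (t : ℕ)
    (s s' : Fin (t+1)) (i j : V) :
    (genMyc G t).Adj (some (s,i)) (some (s',j)) ↔
      (s,i) ≠ (s',j) ∧
      (((s:ℕ) = 0 ∧ (s':ℕ) = 0 ∧ G.Adj i j) ∨ ((s':ℕ) = (s:ℕ) + 1 ∧ G.Adj i j)
        ∨ ((s:ℕ) = (s':ℕ) + 1 ∧ G.Adj j i)) := by
  simp [genMyc, fromRel_adj, G.adj_comm i j]
  tauto

lemma genMyc_adj_none {V : Type*} (G : SimpleGraph V) (t : ℕ) (v) :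
    (genMyc G t).Adj none v ↔ ∃ s i, v = some (s,i) ∧ (s:ℕ) = t := by
  constructor
  · intro h
    match v with
    | none => exact absurd rfl h.ne
    | some (s,i) => exact ⟨s, i, rfl, ((genMyc_adj_some_none G t s i).1 h.symm)⟩
  · rintro ⟨s, i, rfl, hs⟩
    exact ((genMyc_adj_some_none G t s i).2 hs).symm

/-- the "lower" hub neighbor of a leaf at level `s` -/
def lo (m t : ℕ) (s : Fin (t+1)) : Option (Fin (t+1) × Fin (m+1)) :=
  some (⟨(s:ℕ)-1, lt_of_le_of_lt (Nat.sub_le _ _) s.isLt⟩, 0)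

/-- the "upper" hub neighbor of a leaf at level `s` -/
def hi (m t : ℕ) (s : Fin (t+1)) : Option (Fin (t+1) × Fin (m+1)) :=
  if h : (s:ℕ) < t then some (⟨(s:ℕ)+1, by omega⟩, 0) else none

lemma lo_ne_hi (m t : ℕ) (s : Fin (t+1)) : lo m t s ≠ hi m t s := by
  unfold lo hi
  split
  · intro h
    simp only [Option.some.injEq, Prod.mk.injEq, Fin.mk.injEq] at h
    omega
  · simp

lemma leaf_adj (m t : ℕ) (s : Fin (t+1)) (i : Fin (m+1)) (hi0 : i ≠ 0)
    (x : Option (Fin (t+1) × Fin (m+1))) :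
    (genMyc (starG m) t).Adj (some (s,i)) x ↔ x = lo m t s ∨ x = hi m t s := by
  have hs := s.isLt
  match x with
  | none =>
    rw [genMyc_adj_some_none]
    unfold lo hi
    constructor
    · intro h; right; rw [dif_neg (by omega)]
    · rintro (h | h)
      · exact absurd h (by simp)
      · by_contra hst
        rw [dif_pos (by omega)] at h
        exact absurd h (by simp)
  | some (s', j) =>
    have hi0' : (i:ℕ) ≠ 0 := fun h => hi0 (Fin.ext (by simp [h]))
    rw [genMyc_adj_some_some, starG_adj, starG_adj]
    unfold lo hi
    by_cases hlt : (s:ℕ) < t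
    · rw [dif_pos hlt]
      simp only [ne_eq, Prod.mk.injEq, Option.some.injEq, Fin.ext_iff, Fin.val_zero, not_and]
      omega
    · rw [dif_neg hlt]
      simp only [ne_eq, Prod.mk.injEq, Option.some.injEq, Fin.ext_iff, Fin.val_zero, not_and,
        reduceCtorEq, or_false]
      omega

def IsHub (m t : ℕ) (v : Option (Fin (t+1) × Fin (m+1))) : Prop :=
  ∃ x y z, (genMyc (starG m) t).Adj v x ∧ (genMyc (starG m) t).Adj v y ∧
    (genMyc (starG m) t).Adj v z ∧ x ≠ y ∧ x ≠ z ∧ y ≠ z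

lemma leaf_not_hub (m t : ℕ) (s : Fin (t+1)) (i : Fin (m+1)) (hi0 : i ≠ 0) :
    ¬ IsHub m t (some (s,i)) := by
  rintro ⟨x, y, z, hx, hy, hz, hxy, hxz, hyz⟩
  rw [leaf_adj m t s i hi0] at hx hy hz
  rcases hx with rfl | rfl <;> rcases hy with rfl | rfl <;> rcases hz with rfl | rfl <;>
    simp_all

lemma adj_center (m t : ℕ) (s s' : Fin (t+1)) (j : Fin (m+1)) (hj : (j:ℕ) ≠ 0)
    (h : (s':ℕ) = (s:ℕ)+1 ∨ (s:ℕ) = (s':ℕ)+1 ∨ ((s:ℕ) = 0 ∧ (s':ℕ) = 0)) :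
    (genMyc (starG m) t).Adj (some (s,0)) (some (s',j)) := by
  rw [genMyc_adj_some_some, starG_adj, starG_adj]
  simp only [ne_eq, Prod.mk.injEq, Option.some.injEq, Fin.ext_iff, Fin.val_zero, not_and,
    true_or, or_true, and_true, true_and]
  omega

lemma hub_none (m t : ℕ) (hm : 2 ≤ m) : IsHub m t none := by
  refine ⟨some (Fin.last t, ⟨0, by omega⟩), some (Fin.last t, ⟨1, by omega⟩),
    some (Fin.last t, ⟨2, by omega⟩), ?_, ?_, ?_, ?_, ?_, ?_⟩
  · exact ((genMyc_adj_some_none _ t _ _).2 (by simp)).symm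
  · exact ((genMyc_adj_some_none _ t _ _).2 (by simp)).symm
  · exact ((genMyc_adj_some_none _ t _ _).2 (by simp)).symm
  all_goals simp [Fin.ext_iff]

lemma hub_center (m t : ℕ) (hm : 2 ≤ m) (ht : 1 ≤ t) (s : Fin (t+1)) :
    IsHub m t (some (s, 0)) := by
  have hs := s.isLt
  by_cases hlt : (s:ℕ) < t
  · by_cases h0 : (s:ℕ) = 0
    · exact ⟨some (⟨(s:ℕ)+1, by omega⟩, ⟨1, by omega⟩), some (⟨(s:ℕ)+1, by omega⟩, ⟨2, by omega⟩),
        some (s, ⟨1, by omega⟩),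
        adj_center m t _ _ _ (by simp) (by simp; try omega),
        adj_center m t _ _ _ (by simp) (by simp; try omega),
        adj_center m t _ _ _ (by simp) (by simp [h0]),
        by simp [Fin.ext_iff], by simp [Fin.ext_iff]; try omega, by simp [Fin.ext_iff]; try omega⟩
    · exact ⟨some (⟨(s:ℕ)+1, by omega⟩, ⟨1, by omega⟩), some (⟨(s:ℕ)+1, by omega⟩, ⟨2, by omega⟩),
        some (⟨(s:ℕ)-1, by omega⟩, ⟨1, by omega⟩),
        adj_center m t _ _ _ (by simp) (by simp),
        adj_center m t _ _ _ (by simp) (by simp),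
        adj_center m t _ _ _ (by simp) (by simp; try omega),
        by simp [Fin.ext_iff], by simp [Fin.ext_iff]; try omega, by simp [Fin.ext_iff]; try omega⟩
  · have hst : (s:ℕ) = t := by omega
    exact ⟨some (⟨(s:ℕ)-1, by omega⟩, ⟨1, by omega⟩), some (⟨(s:ℕ)-1, by omega⟩, ⟨2, by omega⟩),
      none,
      adj_center m t _ _ _ (by simp) (by simp; try omega),
      adj_center m t _ _ _ (by simp) (by simp; try omega),
      (genMyc_adj_some_none _ t _ _).2 hst,
      by simp [Fin.ext_iff]; try omega, by simp, by simp⟩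

lemma hub_iff (m t : ℕ) (hm : 2 ≤ m) (ht : 1 ≤ t) (v : Option (Fin (t+1) × Fin (m+1))) :
    IsHub m t v ↔ v = none ∨ ∃ s, v = some (s, 0) := by
  constructor
  · intro h
    match v with
    | none => exact Or.inl rfl
    | some (s, i) =>
      by_cases hi0 : i = 0
      · exact Or.inr ⟨s, by rw [hi0]⟩
      · exact absurd h (leaf_not_hub m t s i hi0)
  · rintro (rfl | ⟨s, rfl⟩)
    · exact hub_none m t hm
    · exact hub_center m t hm ht s

lemma hub_map (m t : ℕ) (φ : (genMyc (starG m) t) ≃g (genMyc (starG m) t))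
    (v : Option (Fin (t+1) × Fin (m+1))) (h : IsHub m t v) : IsHub m t (φ v) := by
  obtain ⟨x, y, z, hx, hy, hz, hxy, hxz, hyz⟩ := h
  exact ⟨φ x, φ y, φ z, φ.map_rel_iff.2 hx, φ.map_rel_iff.2 hy, φ.map_rel_iff.2 hz,
    fun h => hxy (φ.toEquiv.injective h), fun h => hxz (φ.toEquiv.injective h),
    fun h => hyz (φ.toEquiv.injective h)⟩

lemma hub_map_iff (m t : ℕ) (φ : (genMyc (starG m) t) ≃g (genMyc (starG m) t))
    (v : Option (Fin (t+1) × Fin (m+1))) : IsHub m t (φ v) ↔ IsHub m t v := by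
  constructor
  · intro h
    have := hub_map m t φ.symm _ h
    simpa using this
  · exact hub_map m t φ v

/-- coloring: root gets color 1, centers color 0, leaf `i` gets color `i-1` -/
def col (m t : ℕ) (hm : 2 ≤ m) (v : Option (Fin (t+1) × Fin (m+1))) : Fin m :=
  Option.casesOn v ⟨1, by omega⟩ (fun p => ⟨(p.2:ℕ) - 1, by have := p.2.isLt; omega⟩)

lemma col_distinguishing (m t : ℕ) (hm : 2 ≤ m) (ht : 1 ≤ t) :
    IsDistinguishing (genMyc (starG m) t) m (col m t hm) := by
  intro φ hc
  have hinj : Function.Injective φ := φ.toEquiv.injective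
  -- Step 1 : the root is fixed
  have h1 : φ none = none := by
    rcases (hub_iff m t hm ht _).1 (hub_map m t φ none (hub_none m t hm)) with h | ⟨s, h⟩
    · exact h
    · exfalso
      have hcn := hc none
      rw [h] at hcn
      simp [col, Fin.ext_iff] at hcn
  have hne_none : ∀ v, v ≠ none → φ v ≠ none := by
    intro v hv h
    exact hv (hinj (h.trans h1.symm))
  -- non-hubs go to leaves
  have hleaf : ∀ (s : Fin (t+1)) (i : Fin (m+1)), i ≠ 0 →
      ∃ s' j, j ≠ (0 : Fin (m+1)) ∧ φ (some (s,i)) = some (s', j) := by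
    intro s i hi0
    have hnh : ¬ IsHub m t (φ (some (s,i))) :=
      fun h => leaf_not_hub m t s i hi0 ((hub_map_iff m t φ _).1 h)
    cases hφ : φ (some (s,i)) with
    | none =>
      rw [hφ] at hnh
      exact absurd ((hub_iff m t hm ht _).2 (Or.inl rfl)) hnh
    | some p =>
      obtain ⟨s', j⟩ := p
      rw [hφ] at hnh
      by_cases hj : j = 0
      · subst hj
        exact absurd ((hub_iff m t hm ht _).2 (Or.inr ⟨s', rfl⟩)) hnh
      · exact ⟨s', j, hj, rfl⟩
  -- Step 2 : the top center is fixed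
  have h2 : φ (some (Fin.last t, 0)) = some (Fin.last t, 0) := by
    have hadj : (genMyc (starG m) t).Adj (some (Fin.last t, (0:Fin (m+1)))) none :=
      (genMyc_adj_some_none _ t _ _).2 (by simp)
    have hadj' : (genMyc (starG m) t).Adj (φ (some (Fin.last t, 0))) none := by
      have := φ.map_rel_iff.2 hadj
      rwa [h1] at this
    cases hφ : φ (some (Fin.last t, 0)) with
    | none => exact absurd hφ (hne_none _ (by simp))
    | some p =>
      obtain ⟨s, i⟩ := p
      rw [hφ] at hadj'
      have hs : (s:ℕ) = t := (genMyc_adj_some_none _ t _ _).1 hadj'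
      have hhub : IsHub m t (some (s, i)) :=
        hφ ▸ hub_map m t φ _ (hub_center m t hm ht (Fin.last t))
      rcases (hub_iff m t hm ht _).1 hhub with h | ⟨s2, h⟩
      · exact absurd h (by simp)
      · have hi0 : i = 0 := by
          have := (Prod.ext_iff.1 (Option.some_injective _ h)).2
          simpa using this
        subst hi0
        have hsl : s = Fin.last t := Fin.ext (by simp [hs])
        rw [hsl]
  -- Step 3 : top-level leaves are fixed
  have h3 : ∀ i : Fin (m+1), i ≠ 0 → φ (some (Fin.last t, i)) = some (Fin.last t, i) := by
    intro i hi0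
    obtain ⟨s', j, hj, hφ⟩ := hleaf (Fin.last t) i hi0
    have hadj : (genMyc (starG m) t).Adj (some (Fin.last t, i)) none :=
      (genMyc_adj_some_none _ t _ _).2 (by simp)
    have hadj' : (genMyc (starG m) t).Adj (some (s', j)) none := by
      have := φ.map_rel_iff.2 hadj
      rwa [h1, hφ] at this
    have hs' : (s':ℕ) = t := (genMyc_adj_some_none _ t _ _).1 hadj'
    have hcol := hc (some (Fin.last t, i))
    rw [hφ] at hcol
    simp only [col, Fin.mk.injEq] at hcol
    have hj' : (j:ℕ) ≠ 0 := fun h => hj (Fin.ext (by simp [h]))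
    have hi' : (i:ℕ) ≠ 0 := fun h => hi0 (Fin.ext (by simp [h]))
    rw [hφ]
    have hji : j = i := Fin.ext (by omega)
    have hsl : s' = Fin.last t := Fin.ext (by simp [hs'])
    rw [hji, hsl]
  -- Step 4 : all centers are fixed, by downward induction
  have hcent : ∀ k (s : Fin (t+1)), t ≤ (s:ℕ) + k → φ (some (s,0)) = some (s,0) := by
    intro k
    induction k with
    | zero =>
      intro s hs
      have : s = Fin.last t := Fin.ext (by have := s.isLt; simp; omega)
      rw [this]; exact h2
    | succ k ih =>
      intro s hs
      by_cases hk : t ≤ (s:ℕ) + k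
      · exact ih s hk
      · have hs' : (s:ℕ) + k + 1 = t := by omega
        by_cases hs1 : (s:ℕ) = t - 1
        · -- s is the second-from-top center, other hub neighbor of a fixed top leaf
          have hone : ((⟨1, by omega⟩ : Fin (m+1))) ≠ 0 := by simp [Fin.ext_iff]
          have hl := h3 ⟨1, by omega⟩ hone
          have hadj : (genMyc (starG m) t).Adj (some (Fin.last t, ⟨1, by omega⟩))
              (lo m t (Fin.last t)) :=
            (leaf_adj m t _ _ hone _).2 (Or.inl rfl)
          have hadj' : (genMyc (starG m) t).Adj (some (Fin.last t, ⟨1, by omega⟩))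
              (φ (lo m t (Fin.last t))) := by
            have := φ.map_rel_iff.2 hadj
            rwa [hl] at this
          have hls : lo m t (Fin.last t) = some (s, 0) := by
            simp only [lo, Option.some.injEq, Prod.mk.injEq]
            exact ⟨Fin.ext (by simp [Fin.ext_iff]; omega), trivial⟩
          rcases (leaf_adj m t _ _ hone _).1 hadj' with h | h
          · rw [← hls]; exact h
          · exfalso
            have hhn : hi m t (Fin.last t) = none := by
              simp only [hi]
              rw [dif_neg (by simp)]
            rw [hhn] at h
            exact hne_none _ (by simp [lo]) h
        · -- s is at level ≤ t-2
          have hsle : (s:ℕ) + 2 ≤ t := by omega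
          have hs2 : φ (some (⟨(s:ℕ)+2, by omega⟩, 0)) = some (⟨(s:ℕ)+2, by omega⟩, 0) :=
            ih ⟨(s:ℕ)+2, by omega⟩ (by show t ≤ (s:ℕ)+2+k; omega)
          have hone : ((⟨1, by omega⟩ : Fin (m+1))) ≠ 0 := by simp [Fin.ext_iff]
          have hlo1 : lo m t (⟨(s:ℕ)+1, by omega⟩ : Fin (t+1)) = some (s, 0) := by
            simp only [lo, Option.some.injEq, Prod.mk.injEq]
            exact ⟨Fin.ext (by simp), trivial⟩
          have hhi1 : hi m t (⟨(s:ℕ)+1, by omega⟩ : Fin (t+1)) = some (⟨(s:ℕ)+2, by omega⟩, 0) := by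
            simp only [hi]
            rw [dif_pos (by show (s:ℕ)+1 < t; omega)]
          obtain ⟨s', j, hj, hφℓ⟩ := hleaf ⟨(s:ℕ)+1, by omega⟩ ⟨1, by omega⟩ hone
          have hadjhi : (genMyc (starG m) t).Adj (some (⟨(s:ℕ)+1, by omega⟩, ⟨1, by omega⟩))
              (some (⟨(s:ℕ)+2, by omega⟩, 0)) :=
            (leaf_adj m t _ _ hone _).2 (Or.inr hhi1.symm)
          have hadjlo : (genMyc (starG m) t).Adj (some (⟨(s:ℕ)+1, by omega⟩, ⟨1, by omega⟩))
              (some (s, 0)) :=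
            (leaf_adj m t _ _ hone _).2 (Or.inl hlo1.symm)
          have h4 : (genMyc (starG m) t).Adj (some (s', j)) (some (⟨(s:ℕ)+2, by omega⟩, 0)) := by
            have := φ.map_rel_iff.2 hadjhi
            rwa [hφℓ, hs2] at this
          have h5 : (genMyc (starG m) t).Adj (some (s', j)) (φ (some (s, 0))) := by
            have := φ.map_rel_iff.2 hadjlo
            rwa [hφℓ] at this
          have h6 := (leaf_adj m t _ _ hj _).1 h4
          have h7 := (leaf_adj m t _ _ hj _).1 h5
          rcases h6 with h6 | h6
          · -- the fixed center C_{s+2} is the low neighbor : s' is at level s+3, contradiction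
            exfalso
            have hs'3 : (s':ℕ) = (s:ℕ) + 3 := by
              simp only [lo, Option.some.injEq, Prod.mk.injEq, Fin.ext_iff] at h6
              omega
            rcases h7 with h7 | h7
            · have h8 : φ (some (s, 0)) = some (⟨(s:ℕ)+2, by omega⟩, 0) := h7.trans h6.symm
              have := hinj (h8.trans hs2.symm)
              simp [Fin.ext_iff] at this
            · by_cases hlt : (s':ℕ) < t
              · simp only [hi] at h7
                rw [dif_pos hlt] at h7
                have h8 : φ (some (⟨(s':ℕ)+1, by omega⟩, 0)) = some (⟨(s':ℕ)+1, by omega⟩, 0) :=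
                  ih ⟨(s':ℕ)+1, by omega⟩ (by show t ≤ (s':ℕ)+1+k; omega)
                have := hinj (h7.trans h8.symm)
                simp [Fin.ext_iff] at this
                omega
              · simp only [hi] at h7
                rw [dif_neg hlt] at h7
                exact hne_none _ (by simp) h7
          · -- the fixed center C_{s+2} is the high neighbor : s' is at level s+1
            by_cases hlt : (s':ℕ) < t
            · simp only [hi] at h6
              rw [dif_pos hlt] at h6
              have hs'1 : (s':ℕ) = (s:ℕ) + 1 := by
                simp only [Option.some.injEq, Prod.mk.injEq, Fin.ext_iff] at h6
                omega
              rcases h7 with h7 | h7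
              · rw [h7]
                simp only [lo, Option.some.injEq, Prod.mk.injEq]
                exact ⟨Fin.ext (by simp [hs'1]), trivial⟩
              · exfalso
                simp only [hi] at h7
                rw [dif_pos hlt] at h7
                have h8 : φ (some (s, 0)) = some (⟨(s:ℕ)+2, by omega⟩, 0) := by
                  rw [h7]
                  simp [Fin.ext_iff, hs'1]
                have := hinj (h8.trans hs2.symm)
                simp [Fin.ext_iff] at this
            · exfalso
              simp only [hi] at h6
              rw [dif_neg hlt] at h6
              exact absurd h6 (by simp)
  -- Step 5 : all centers fixed
  have h5c : ∀ s : Fin (t+1), φ (some (s, 0)) = some (s, 0) := fun s => hcent t s (by omega)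
  -- Step 6 : all leaves fixed
  have h6l : ∀ (s : Fin (t+1)) (i : Fin (m+1)), i ≠ 0 → φ (some (s, i)) = some (s, i) := by
    intro s i hi0
    obtain ⟨s', j, hj, hφ⟩ := hleaf s i hi0
    have hfixlo : φ (lo m t s) = lo m t s := h5c _
    have hfixhi : φ (hi m t s) = hi m t s := by
      by_cases hlt : (s:ℕ) < t
      · simp only [hi]; rw [dif_pos hlt]; exact h5c _
      · simp only [hi]; rw [dif_neg hlt]; exact h1
    have hadlo : (genMyc (starG m) t).Adj (some (s', j)) (lo m t s) := by
      have := φ.map_rel_iff.2 ((leaf_adj m t s i hi0 _).2 (Or.inl rfl))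
      rwa [hφ, hfixlo] at this
    have hadhi : (genMyc (starG m) t).Adj (some (s', j)) (hi m t s) := by
      have := φ.map_rel_iff.2 ((leaf_adj m t s i hi0 _).2 (Or.inr rfl))
      rwa [hφ, hfixhi] at this
    have hmlo := (leaf_adj m t s' j hj _).1 hadlo
    have hmhi := (leaf_adj m t s' j hj _).1 hadhi
    have hss' : (s':ℕ) = (s:ℕ) := by
      rcases hmlo with hA | hA <;> rcases hmhi with hB | hB
      · exact absurd (hA.trans hB.symm) (lo_ne_hi m t s)
      · -- lo s = lo s', hi s = hi s'
        by_cases hlt : (s:ℕ) < t <;> by_cases hlt' : (s':ℕ) < t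
        · simp only [hi] at hB
          rw [dif_pos hlt, dif_pos hlt'] at hB
          simp only [Option.some.injEq, Prod.mk.injEq, Fin.ext_iff] at hB
          omega
        · simp only [hi] at hB
          rw [dif_pos hlt, dif_neg hlt'] at hB
          exact absurd hB (by simp)
        · simp only [hi] at hB
          rw [dif_neg hlt, dif_pos hlt'] at hB
          exact absurd hB (by simp)
        · omega
      · -- lo s = hi s', hi s = lo s' : impossible
        exfalso
        by_cases hlt' : (s':ℕ) < t
        · simp only [hi] at hA
          rw [dif_pos hlt'] at hA
          simp only [lo, Option.some.injEq, Prod.mk.injEq, Fin.ext_iff] at hA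
          by_cases hlt : (s:ℕ) < t
          · simp only [hi] at hB
            rw [dif_pos hlt] at hB
            simp only [lo, Option.some.injEq, Prod.mk.injEq, Fin.ext_iff] at hB
            omega
          · simp only [hi] at hB
            rw [dif_neg hlt] at hB
            exact absurd hB.symm (by simp [lo])
        · simp only [hi] at hA
          rw [dif_neg hlt'] at hA
          exact absurd hA (by simp [lo])
      · exact absurd (hA.trans hB.symm) (lo_ne_hi m t s)
    have hcol := hc (some (s, i))
    rw [hφ] at hcol
    simp only [col, Fin.mk.injEq] at hcol
    have hj' : (j:ℕ) ≠ 0 := fun h => hj (Fin.ext (by simp [h]))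
    have hi' : (i:ℕ) ≠ 0 := fun h => hi0 (Fin.ext (by simp [h]))
    rw [hφ]
    have : j = i := Fin.ext (by omega)
    rw [this, Fin.ext (hss' : (s':ℕ) = (s:ℕ))]
  -- conclusion
  intro v
  match v with
  | none => exact h1
  | some (s, i) =>
    by_cases hi0 : i = 0
    · rw [hi0]; exact h5c s
    · exact h6l s i hi0

/-- Swapping two nonadjacent vertices with the same neighborhood is an automorphism. -/
lemma swap_iso {α : Type*} (H : SimpleGraph α) [DecidableEq α] (a b : α)
    (hnadj : ¬H.Adj a b) (hN : ∀ x, H.Adj a x ↔ H.Adj b x) :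
    ∃ ψ : H ≃g H, ψ a = b ∧ ψ b = a ∧ ∀ x, x ≠ a → x ≠ b → ψ x = x := by
  have key : ∀ x y, H.Adj x y → H.Adj (Equiv.swap a b x) (Equiv.swap a b y) := by
    intro x y hxy
    by_cases hxa : x = a
    · rw [hxa, Equiv.swap_apply_left]
      rw [hxa] at hxy
      by_cases hya : y = a
      · exact absurd (hya ▸ hxy) (H.irrefl)
      · by_cases hyb : y = b
        · exact absurd (hyb ▸ hxy) hnadj
        · rw [Equiv.swap_apply_of_ne_of_ne hya hyb]
          exact (hN y).1 hxy
    · by_cases hxb : x = b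
      · rw [hxb, Equiv.swap_apply_right]
        rw [hxb] at hxy
        by_cases hya : y = a
        · exact absurd (hya ▸ hxy) (fun h => hnadj h.symm)
        · by_cases hyb : y = b
          · exact absurd (hyb ▸ hxy) (H.irrefl)
          · rw [Equiv.swap_apply_of_ne_of_ne hya hyb]
            exact (hN y).2 hxy
      · rw [Equiv.swap_apply_of_ne_of_ne hxa hxb]
        by_cases hya : y = a
        · rw [hya, Equiv.swap_apply_left]
          rw [hya] at hxy
          exact ((hN x).1 hxy.symm).symm
        · by_cases hyb : y = b
          · rw [hyb, Equiv.swap_apply_right]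
            rw [hyb] at hxy
            exact ((hN x).2 hxy.symm).symm
          · rw [Equiv.swap_apply_of_ne_of_ne hya hyb]
            exact hxy
  refine ⟨⟨Equiv.swap a b, ?_⟩, Equiv.swap_apply_left a b, Equiv.swap_apply_right a b,
    fun x hxa hxb => Equiv.swap_apply_of_ne_of_ne hxa hxb⟩
  intro x y
  constructor
  · intro h
    have := key _ _ h
    simpa using this
  · exact key x y

theorem stmt_15 (m t : ℕ) (hm : 2 ≤ m) (ht : 1 ≤ t) :
    distNum (genMyc (starG m) t) = m := by
  have hmem : m ∈ {d | ∃ c, IsDistinguishing (genMyc (starG m) t) d c} :=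
    ⟨col m t hm, col_distinguishing m t hm ht⟩
  have hlb : ∀ d ∈ {d | ∃ c, IsDistinguishing (genMyc (starG m) t) d c}, m ≤ d := by
    rintro d ⟨c, hcdist⟩
    by_contra hlt
    push_neg at hlt
    obtain ⟨k1, k2, hne, heq⟩ :=
      Fintype.exists_ne_map_eq_of_card_lt
        (fun k : Fin m => c (some (Fin.last t, k.succ))) (by simpa using hlt)
    set a : Option (Fin (t+1) × Fin (m+1)) := some (Fin.last t, k1.succ) with ha
    set b : Option (Fin (t+1) × Fin (m+1)) := some (Fin.last t, k2.succ) with hb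
    have hnadj : ¬ (genMyc (starG m) t).Adj a b := by
      rw [ha, hb, genMyc_adj_some_some]
      rintro ⟨-, (⟨h0, -, -⟩ | ⟨h0, -⟩ | ⟨h0, -⟩)⟩ <;> rw [Fin.val_last] at h0 <;> omega
    have hN : ∀ x, (genMyc (starG m) t).Adj a x ↔ (genMyc (starG m) t).Adj b x := fun x => by
      rw [ha, hb, leaf_adj m t _ _ (Fin.succ_ne_zero k1) x,
        leaf_adj m t _ _ (Fin.succ_ne_zero k2) x]
    obtain ⟨ψ, hψa, hψb, hψ⟩ := swap_iso _ a b hnadj hN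
    have hpres : ∀ v, c (ψ v) = c v := by
      intro v
      by_cases hva : v = a
      · rw [hva, hψa]; exact heq.symm
      · by_cases hvb : v = b
        · rw [hvb, hψb]; exact heq
        · rw [hψ v hva hvb]
    have hfix := hcdist ψ hpres a
    rw [hψa] at hfix
    rw [ha, hb] at hfix
    simp only [Option.some.injEq, Prod.mk.injEq] at hfix
    exact hne (Fin.succ_injective m hfix.2).symm
  exact le_antisymm (Nat.sInf_le hmem) (le_csInf ⟨m, hmem⟩ hlb)
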